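/- For every x > 0, the matrix built from f(x) = arcsinh(x) = log(x + √(x²+1)) is Kwong on (0,∞): for any distinct positive reals x₁,…,xₙ, the matrix [(arcsinh(xᵢ)+arcsinh(xⱼ))/(xᵢ+xⱼ)] is positive semidefinite. -/

import Mathlib

open Real MeasureTheory Set

lemma intExp {c : ℝ} (hc : 0 < c) :
    ∫ τ in Ioi (0:ℝ), Real.exp (-(c * τ)) = 1 / c := by
  have h := integral_comp_mul_left_Ioi (fun x => Real.exp (-x)) 0 hc
  simp only [mul_zero, integral_exp_neg_Ioi, neg_zero, Real.exp_zero, smul_eq_mul, mul_one] at h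
  rw [h, one_div]

lemma cauchy_quad {n : ℕ} (u w : Fin n → ℝ) (hu : ∀ i, 0 < u i) :
    0 ≤ ∑ i, ∑ j, w i * w j / (u i + u j) := by
  have hInt : ∀ (c : ℝ), 0 < c →
      Integrable (fun τ : ℝ => Real.exp (-(c * τ))) (volume.restrict (Ioi 0)) := by
    intro c hc
    have := exp_neg_integrableOn_Ioi 0 hc
    exact (by simpa [neg_mul] using this : IntegrableOn (fun τ : ℝ => Real.exp (-(c * τ))) (Ioi 0))
  have key : ∑ i, ∑ j, w i * w j / (u i + u j)
      = ∫ τ in Ioi (0:ℝ), (∑ i, w i * Real.exp (-(u i * τ)))^2 := by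
    have hexp : ∀ τ : ℝ, (∑ i, w i * Real.exp (-(u i * τ)))^2
        = ∑ i, ∑ j, w i * w j * Real.exp (-((u i + u j) * τ)) := by
      intro τ
      rw [sq, Finset.sum_mul_sum]
      refine Finset.sum_congr rfl fun i _ => Finset.sum_congr rfl fun j _ => ?_
      rw [show -((u i + u j) * τ) = -(u i * τ) + -(u j * τ) by ring, Real.exp_add]; ring
    simp_rw [hexp]
    rw [integral_finset_sum _ (fun i _ => integrable_finset_sum _ (fun j _ =>
      ((hInt _ (by have := hu i; have := hu j; positivity)).const_mul _)))]
    refine Finset.sum_congr rfl fun i _ => ?_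
    rw [integral_finset_sum _ (fun j _ =>
      ((hInt _ (by have := hu i; have := hu j; positivity)).const_mul _))]
    refine Finset.sum_congr rfl fun j _ => ?_
    rw [integral_const_mul, intExp (by have := hu i; have := hu j; positivity), mul_one_div]
  rw [key]
  exact integral_nonneg fun τ => sq_nonneg _

lemma ident {t s : ℝ} (ht : 0 < t) (hs : 0 < s) :
    (t / √(1+t^2) + s / √(1+s^2)) / (t + s)
      = ((t + √(1+t^2)) / √(1+t^2) * ((s + √(1+s^2)) / √(1+s^2))
          + 1 / √(1+t^2) * (1 / √(1+s^2)))
        / ((t + √(1+t^2)) + (s + √(1+s^2))) := by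
  set c := √(1+t^2) with hcdef
  set d := √(1+s^2) with hddef
  have hc2 : c^2 = 1 + t^2 := Real.sq_sqrt (by positivity)
  have hd2 : d^2 = 1 + s^2 := Real.sq_sqrt (by positivity)
  have hc : 0 < c := Real.sqrt_pos.2 (by positivity)
  have hd : 0 < d := Real.sqrt_pos.2 (by positivity)
  have hts : 0 < t + s := by linarith
  have hUV : 0 < (t + c) + (s + d) := by positivity
  rw [div_eq_div_iff (by positivity) (by positivity)]
  have key : (t*d + s*c) * ((t+c)+(s+d)) = ((t+c)*(s+d)+1)*(t+s) := by
    linear_combination t * hd2 + s * hc2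
  field_simp
  linear_combination (c*d) * key + (t - t*d*c) * hd2 + (s - s*d*c) * hc2

lemma kwong_phi {n : ℕ} (t v : Fin n → ℝ) (ht : ∀ i, 0 < t i) :
    0 ≤ ∑ i, ∑ j, v i * v j *
      ((t i / √(1+(t i)^2) + t j / √(1+(t j)^2)) / (t i + t j)) := by
  set U : Fin n → ℝ := fun i => t i + √(1+(t i)^2) with hUdef
  have hU : ∀ i, 0 < U i := fun i => by
    have := ht i; have : (0:ℝ) < √(1+(t i)^2) := Real.sqrt_pos.2 (by positivity)
    simp only [hUdef]; nlinarith [ht i]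
  set W : Fin n → ℝ := fun i => (t i + √(1+(t i)^2)) / √(1+(t i)^2) with hWdef
  set Z : Fin n → ℝ := fun i => 1 / √(1+(t i)^2) with hZdef
  have hterm : ∀ i j, v i * v j *
      ((t i / √(1+(t i)^2) + t j / √(1+(t j)^2)) / (t i + t j))
      = (v i * W i) * (v j * W j) / (U i + U j)
        + (v i * Z i) * (v j * Z j) / (U i + U j) := by
    intro i j
    rw [ident (ht i) (ht j)]
    simp only [hUdef, hWdef, hZdef]
    ring
  simp_rw [hterm, Finset.sum_add_distrib]
  exact add_nonneg (cauchy_quad U (fun i => v i * W i) hU)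
    (cauchy_quad U (fun i => v i * Z i) hU)

/-- `arcsinh` is a Kwong function on `(0,∞)`: for distinct positive reals `x₁,…,xₙ` the matrix
`[(arcsinh xᵢ + arcsinh xⱼ)/(xᵢ + xⱼ)]` is positive semidefinite. -/
theorem arcsinh_kwong (n : ℕ) (x : Fin n → ℝ) (hx : ∀ i, 0 < x i)
    (hinj : Function.Injective x) :
    (Matrix.of fun i j => (Real.arsinh (x i) + Real.arsinh (x j)) / (x i + x j) :
      Matrix (Fin n) (Fin n) ℝ).PosSemidef := by
  have hxs : ∀ i j, (0:ℝ) < x i + x j := fun i j => add_pos (hx i) (hx j)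
  rw [Matrix.posSemidef_iff_dotProduct_mulVec]
  constructor
  · ext i j
    simp only [Matrix.conjTranspose_apply, Matrix.of_apply, star_trivial]
    rw [add_comm (Real.arsinh (x j)), add_comm (x j)]
  intro y
  simp only [dotProduct, Matrix.mulVec, Matrix.of_apply, Pi.star_apply, star_trivial]
  -- the integrand family
  set f : Fin n → ℝ → ℝ := fun i s => x i / √(1+(s * x i)^2) with hfdef
  have hfc : ∀ i, Continuous (f i) := by
    intro i
    apply Continuous.div continuous_const
    · exact (continuous_const.add ((continuous_id.mul continuous_const).pow 2)).sqrt
    · intro s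
      exact ne_of_gt (Real.sqrt_pos.2 (by positivity))
  have hfi : ∀ i, IntervalIntegrable (f i) volume 0 1 :=
    fun i => (hfc i).intervalIntegrable 0 1
  have h1 : ∀ i, Real.arsinh (x i) = ∫ s in (0:ℝ)..1, f i s := by
    intro i
    have hderiv : ∀ s ∈ Set.uIcc (0:ℝ) 1,
        HasDerivAt (fun s => Real.arsinh (s * x i)) (f i s) s := by
      intro s _
      have h := (Real.hasDerivAt_arsinh (s * x i)).comp s
        ((hasDerivAt_id s).mul_const (x i))
      simpa [hfdef, div_eq_inv_mul, mul_comm, Function.comp_def] using h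
    have h2 := intervalIntegral.integral_eq_sub_of_hasDerivAt hderiv (hfi i)
    simp only [one_mul, zero_mul, Real.arsinh_zero, sub_zero] at h2
    exact h2.symm
  set g : Fin n → Fin n → ℝ → ℝ :=
    fun i j s => y i * y j * ((f i s + f j s) / (x i + x j)) with hgdef
  have hgc : ∀ i j, Continuous (g i j) := fun i j =>
    continuous_const.mul (((hfc i).add (hfc j)).div_const _)
  have hgi : ∀ i j, IntervalIntegrable (g i j) volume 0 1 :=
    fun i j => (hgc i j).intervalIntegrable 0 1
  have hstep : ∀ i j, y i * ((Real.arsinh (x i) + Real.arsinh (x j)) / (x i + x j) * y j)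
      = ∫ s in (0:ℝ)..1, g i j s := by
    intro i j
    have heq : (fun s => g i j s)
        = fun s => (y i * y j / (x i + x j)) * (f i s + f j s) := by
      funext s; simp only [hgdef]; ring
    rw [show (∫ s in (0:ℝ)..1, g i j s) = ∫ s in (0:ℝ)..1,
        (y i * y j / (x i + x j)) * (f i s + f j s) from by rw [← heq],
      intervalIntegral.integral_const_mul,
      intervalIntegral.integral_add (hfi i) (hfi j), ← h1 i, ← h1 j]
    ring
  have hsum : (∑ i, y i * ∑ j, (Real.arsinh (x i) + Real.arsinh (x j)) / (x i + x j) * y j)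
      = ∫ s in (0:ℝ)..1, ∑ i, ∑ j, g i j s := by
    simp_rw [Finset.mul_sum]
    calc (∑ i, ∑ j, y i * ((Real.arsinh (x i) + Real.arsinh (x j)) / (x i + x j) * y j))
        = ∑ i, ∑ j, ∫ s in (0:ℝ)..1, g i j s :=
          Finset.sum_congr rfl fun i _ => Finset.sum_congr rfl fun j _ => hstep i j
      _ = ∑ i, ∫ s in (0:ℝ)..1, ∑ j, g i j s :=
          Finset.sum_congr rfl fun i _ =>
            (intervalIntegral.integral_finset_sum fun j _ => hgi i j).symm
      _ = ∫ s in (0:ℝ)..1, ∑ i, ∑ j, g i j s :=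
          (intervalIntegral.integral_finset_sum fun i _ =>
            (continuous_finset_sum _ fun j _ => hgc i j).intervalIntegrable 0 1).symm
  rw [hsum]
  apply intervalIntegral.integral_nonneg zero_le_one
  intro s hs
  rcases eq_or_lt_of_le hs.1 with hs0 | hs0
  · -- s = 0
    have hterm : ∀ i j : Fin n, g i j s = y i * y j := by
      intro i j
      simp only [hgdef, hfdef, ← hs0, zero_mul, ne_eq, OfNat.ofNat_ne_zero,
        not_false_eq_true, zero_pow, add_zero, Real.sqrt_one, div_one]
      rw [div_self (ne_of_gt (hxs i j)), mul_one]
    simp_rw [hterm, ← Finset.sum_mul_sum]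
    exact mul_self_nonneg _
  · -- 0 < s
    have hterm : ∀ i j : Fin n, g i j s
        = y i * y j * ((s * x i / √(1+(s * x i)^2) + s * x j / √(1+(s * x j)^2))
            / (s * x i + s * x j)) := by
      intro i j
      simp only [hgdef, hfdef]
      rw [mul_div_assoc s (x i), mul_div_assoc s (x j), ← mul_add,
        ← mul_add s (x i) (x j), mul_div_mul_left _ _ (ne_of_gt hs0)]
    simp_rw [hterm]
    exact kwong_phi (fun i => s * x i) y (fun i => mul_pos hs0 (hx i))
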